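/- If a complete edge-colored graph G contains a rainbow triangle, then G is not a complete edge-colored permutation graph, i.e., for no labeling ℓ of G and no permutations π_1,…,π_k is (G,ℓ) a complete k-edge-colored permutation graph of π_1,…,π_k. -/
import Mathlib


/-- The edge relation `E` on `V` together with the labeling `ℓ : V ≃ Fin n`
is the simple permutation graph of the permutation `π` of `{1,…,n}`:
`{u,v} ∈ E ⇔ ℓ(u) > ℓ(v) and π⁻¹(ℓ(u)) < π⁻¹(ℓ(v))` (stated symmetrically in `u,v`). -/
def IsPermGraph {V : Type*} {n : ℕ} (E : V → V → Prop) (ℓ : V ≃ Fin n)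
    (π : Equiv.Perm (Fin n)) : Prop :=
  ∀ u v : V, E u v ↔
    ((ℓ v < ℓ u ∧ π⁻¹ (ℓ u) < π⁻¹ (ℓ v)) ∨ (ℓ u < ℓ v ∧ π⁻¹ (ℓ v) < π⁻¹ (ℓ u)))

/-- `c` is the edge-coloring of a complete `k`-edge-colored graph on `V`:
it is symmetric, every pair of distinct vertices receives a color in `{1,…,k}`,
and every color in `{1,…,k}` occurs on some edge. -/
def IsCompleteColoring {V : Type*} (k : ℕ) (c : V → V → ℕ) : Prop :=
  (∀ u v : V, c u v = c v u) ∧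
  (∀ u v : V, u ≠ v → c u v ∈ Finset.Icc 1 k) ∧
  (∀ i ∈ Finset.Icc 1 k, ∃ u v : V, u ≠ v ∧ c u v = i)

/-- The edge relation of the `i`-th monochromatic subgraph `G_{|i}`. -/
def monoEdge {V : Type*} (c : V → V → ℕ) (i : ℕ) : V → V → Prop :=
  fun u v => u ≠ v ∧ c u v = i

/-- The complete edge-colored graph with coloring `c` is a complete edge-colored
permutation graph: there are a labeling `ℓ` and permutations `π i` such that every
monochromatic subgraph `(G_{|i}, ℓ)` is the simple permutation graph of `π i`. -/
def IsCECPG {V : Type*} [Fintype V] (c : V → V → ℕ) : Prop :=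
  ∃ (ℓ : V ≃ Fin (Fintype.card V)) (π : ℕ → Equiv.Perm (Fin (Fintype.card V))),
    ∀ i : ℕ, IsPermGraph (monoEdge c i) ℓ (π i)

/-- `c` contains a rainbow triangle: three vertices whose three connecting edges
have pairwise distinct colors. -/
def HasRainbowTriangle {V : Type*} (c : V → V → ℕ) : Prop :=
  ∃ u v w : V, u ≠ v ∧ u ≠ w ∧ v ≠ w ∧
    c u v ≠ c u w ∧ c u v ≠ c v w ∧ c u w ≠ c v w

/-- If a complete `k`-edge-colored graph `G` contains a rainbow triangle,
then for no labeling `ℓ` and no permutations `π_1,…,π_k` is `(G,ℓ)` a complete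
`k`-edge-colored permutation graph of `π_1,…,π_k`. -/
theorem stmt3 {V : Type*} [Fintype V] [Nonempty V] (k : ℕ) (c : V → V → ℕ)
    (hc : IsCompleteColoring k c) (hrb : HasRainbowTriangle c) :
    ∀ (ℓ : V ≃ Fin (Fintype.card V)) (π : ℕ → Equiv.Perm (Fin (Fintype.card V))),
      ¬ (∀ i ∈ Finset.Icc 1 k, IsPermGraph (monoEdge c i) ℓ (π i)) := by
  intro ℓ π H
  obtain ⟨u, v, w, huv, huw, hvw, h4, h5, h6⟩ := hrb
  obtain ⟨sym, hmem, -⟩ := hc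
  -- key lemma: for vertices with increasing labels and pairwise distinct colors, contradiction
  have key : ∀ a b d : V, ℓ a < ℓ b → ℓ b < ℓ d →
      c a b ≠ c a d → c a d ≠ c b d → False := by
    intro a b d hab hbd n1 n2
    have had : a ≠ d := fun h => absurd (congrArg ℓ h) (ne_of_lt (hab.trans hbd))
    have hneab : a ≠ b := fun h => absurd (congrArg ℓ h) (ne_of_lt hab)
    have hnebd : b ≠ d := fun h => absurd (congrArg ℓ h) (ne_of_lt hbd)
    set i := c a d with hi
    have P := H i (hmem a d had)
    -- edge a d exists in color i
    have e1 : (π i)⁻¹ (ℓ d) < (π i)⁻¹ (ℓ a) := by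
      have := (P a d).mp ⟨had, rfl⟩
      rcases this with ⟨h, -⟩ | ⟨-, h⟩
      · exact absurd (hab.trans hbd) (not_lt.mpr h.le)
      · exact h
    -- edge a b does not exist in color i
    have e2 : (π i)⁻¹ (ℓ a) ≤ (π i)⁻¹ (ℓ b) := by
      by_contra hcon
      have : monoEdge c i a b := (P a b).mpr (Or.inr ⟨hab, lt_of_not_ge hcon⟩)
      exact n1 this.2
    -- edge b d does not exist in color i
    have e3 : (π i)⁻¹ (ℓ b) ≤ (π i)⁻¹ (ℓ d) := by
      by_contra hcon
      have : monoEdge c i b d := (P b d).mpr (Or.inr ⟨hbd, lt_of_not_ge hcon⟩)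
      exact n2.symm this.2
    exact absurd ((e2.trans e3).trans_lt e1) (lt_irrefl _)
  have huv' : ℓ u ≠ ℓ v := fun h => huv (ℓ.injective h)
  have huw' : ℓ u ≠ ℓ w := fun h => huw (ℓ.injective h)
  have hvw' : ℓ v ≠ ℓ w := fun h => hvw (ℓ.injective h)
  rcases huv'.lt_or_gt with h1 | h1 <;> rcases huw'.lt_or_gt with h2 | h2 <;>
    rcases hvw'.lt_or_gt with h3 | h3
  all_goals
    first
    | exact absurd ((h2.trans h1).trans h3) (lt_irrefl _)
    | exact absurd ((h1.trans h2).trans h3) (lt_irrefl _)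
    | apply key u v w h1 h3
    | apply key u w v h2 h3
    | apply key w u v h2 h1
    | apply key v u w h1 h2
    | apply key v w u h3 h2
    | apply key w v u h3 h1
  all_goals try simp only [sym v u, sym w u, sym w v]
  all_goals
    first
    | assumption
    | exact h4.symm
    | exact h5.symm
    | exact h6.symm
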